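/- For any n agents with additive valuations, there exists a consensus allocation with at most n(n−1) sharings. -/

import Mathlib

open Finset

/-- `z` is a feasible fractional allocation of `m` objects among `n` agents. -/
def isAlloc {n m : ℕ} (z : Fin n → Fin m → ℝ) : Prop :=
  (∀ i o, 0 ≤ z i o) ∧ ∀ o, ∑ i, z i o = 1

/-- The number of sharings of allocation `z`: `Σ_o (|{i : z i o > 0}| − 1)`. -/
noncomputable def sharings {n m : ℕ} (z : Fin n → Fin m → ℝ) : ℕ :=
  ∑ o, ((univ.filter fun i => 0 < z i o).card - 1)

section
variable {n m : ℕ}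

/-- Constraint map: object-sum constraints plus consensus constraints for `j ≠ j0`. -/
noncomputable def Lmap (v : Fin n → Fin m → ℝ) (j0 : Fin n) :
    ((Fin n × Fin m) → ℝ) →ₗ[ℝ] ((Fin m ⊕ (Fin n × {j : Fin n // j ≠ j0})) → ℝ) where
  toFun f := fun c => match c with
    | Sum.inl o => ∑ i, f (i, o)
    | Sum.inr (i, j) => ∑ o, v i o * f (j.1, o)
  map_add' f g := by
    funext c
    rcases c with o | ⟨i, j⟩ <;> simp [Finset.sum_add_distrib, mul_add]
  map_smul' c f := by
    funext x
    rcases x with o | ⟨i, j⟩ <;> simp [Finset.mul_sum, mul_left_comm]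

noncomputable def extMap (S : Finset (Fin n × Fin m)) :
    (↥S → ℝ) →ₗ[ℝ] ((Fin n × Fin m) → ℝ) where
  toFun f := fun p => if h : p ∈ S then f ⟨p, h⟩ else 0
  map_add' f g := by funext p; by_cases h : p ∈ S <;> simp [h]
  map_smul' c f := by funext p; by_cases h : p ∈ S <;> simp [h]

lemma exists_kernel_vec (v : Fin n → Fin m → ℝ) (j0 : Fin n)
    (S : Finset (Fin n × Fin m)) (hS : m + n * (n - 1) < S.card) :
    ∃ d : Fin n × Fin m → ℝ, d ≠ 0 ∧ (∀ p, p ∉ S → d p = 0) ∧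
      (∀ o, ∑ i, d (i, o) = 0) ∧
      (∀ i, ∀ j : Fin n, j ≠ j0 → ∑ o, v i o * d (j, o) = 0) := by
  classical
  set L := (Lmap v j0).comp (extMap S) with hL
  have hcard : Fintype.card (Fin m ⊕ (Fin n × {j : Fin n // j ≠ j0})) = m + n * (n - 1) := by
    simp [Fintype.card_subtype_compl, Fintype.card_subtype_eq]
  have hninj : ¬ Function.Injective L := by
    intro hinj
    have h1 := LinearMap.finrank_le_finrank_of_injective hinj
    rw [Module.finrank_fintype_fun_eq_card, Module.finrank_fintype_fun_eq_card,
      Fintype.card_coe, hcard] at h1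
    omega
  rw [← LinearMap.ker_eq_bot] at hninj
  obtain ⟨f, hf, hf0⟩ := Submodule.exists_mem_ne_zero_of_ne_bot hninj
  refine ⟨extMap S f, ?_, ?_, ?_, ?_⟩
  · intro h
    apply hf0
    funext p
    have := congrFun h p.1
    simpa [extMap, p.2] using this
  · intro p hp; simp [extMap, hp]
  · intro o
    have := congrFun (LinearMap.mem_ker.mp hf) (Sum.inl o)
    simpa [hL, Lmap, LinearMap.comp_apply] using this
  · intro i j hj
    have := congrFun (LinearMap.mem_ker.mp hf) (Sum.inr (i, ⟨j, hj⟩))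
    simpa [hL, Lmap, LinearMap.comp_apply] using this

end

section
variable {n m : ℕ}

/-- Feasibility predicate: allocation + consensus. -/
def Feas (v : Fin n → Fin m → ℝ) (z : Fin n → Fin m → ℝ) : Prop :=
  isAlloc z ∧ ∀ i j, ∑ o, v i o * z j o = (∑ o, v i o) / n

noncomputable def suppF (z : Fin n → Fin m → ℝ) : Finset (Fin n × Fin m) :=
  univ.filter fun p => 0 < z p.1 p.2

lemma min_supp_le (hn : 0 < n) (v : Fin n → Fin m → ℝ)
    (z : Fin n → Fin m → ℝ) (hz : Feas v z)
    (hmin : ∀ z', Feas v z' → (suppF z).card ≤ (suppF z').card) :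
    (suppF z).card ≤ m + n * (n - 1) := by
  classical
  by_contra hS
  push_neg at hS
  set j0 : Fin n := ⟨0, hn⟩
  obtain ⟨d, hd0, hdsupp, hdsum, hdcons⟩ := exists_kernel_vec v j0 (suppF z) hS
  obtain ⟨⟨hpos, hsum⟩, hcons⟩ := hz
  -- entries outside supp are ≥ 0; in supp are > 0
  have hz_of_mem : ∀ (w : Fin n → Fin m → ℝ) (p : Fin n × Fin m),
      p ∈ suppF w ↔ 0 < w p.1 p.2 := by
    intro w p; simp [suppF]
  have hz_zero : ∀ p : Fin n × Fin m, p ∉ suppF z → z p.1 p.2 = 0 := by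
    intro p hp
    rw [hz_of_mem z] at hp
    exact le_antisymm (not_lt.mp hp) (hpos _ _)
  -- the consensus sums vanish for all j (including j0)
  have hdcons' : ∀ i j, ∑ o, v i o * d (j, o) = 0 := by
    intro i j
    rcases eq_or_ne j j0 with rfl | hj
    · have htot : ∑ j', ∑ o, v i o * d (j', o) = 0 := by
        rw [Finset.sum_comm]
        refine Finset.sum_eq_zero fun o _ => ?_
        rw [← Finset.mul_sum, hdsum o, mul_zero]
      have herase : ∑ j' ∈ univ.erase j0, ∑ o, v i o * d (j', o) = 0 :=
        Finset.sum_eq_zero fun j' hj' => hdcons i j' (Finset.mem_erase.mp hj').1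
      have h5 := Finset.add_sum_erase univ (fun j' => ∑ o, v i o * d (j', o)) (mem_univ j0)
      rw [htot, herase] at h5
      simpa using h5
    · exact hdcons i j hj
  -- d has a negative coordinate
  have hneg : ∃ p : Fin n × Fin m, d p < 0 := by
    have : ∃ p, d p ≠ 0 := by
      by_contra h
      push_neg at h
      exact hd0 (funext h)
    obtain ⟨p, hp⟩ := this
    rcases lt_or_gt_of_ne hp with h | h
    · exact ⟨p, h⟩
    · by_contra hc
      push_neg at hc
      have hall : ∀ i ∈ (univ : Finset (Fin n)), d (i, p.2) = 0 := by
        rw [← Finset.sum_eq_zero_iff_of_nonneg (fun i _ => hc (i, p.2))]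
        exact hdsum p.2
      have := hall p.1 (mem_univ _)
      rw [show (p.1, p.2) = p from rfl] at this
      exact hp this
  set T : Finset (Fin n × Fin m) := univ.filter fun p => d p < 0 with hT
  have hTne : T.Nonempty := by
    obtain ⟨p, hp⟩ := hneg
    exact ⟨p, by simp [hT, hp]⟩
  have hTmem : ∀ p ∈ T, d p < 0 := fun p hp => (Finset.mem_filter.mp hp).2
  have hTsupp : ∀ p ∈ T, 0 < z p.1 p.2 := by
    intro p hp
    rw [← hz_of_mem z]
    by_contra h
    exact absurd (hdsupp p h) (ne_of_lt (hTmem p hp))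
  set t : ℝ := T.inf' hTne (fun p => z p.1 p.2 / (-d p)) with ht
  have htpos : 0 < t := by
    rw [ht, Finset.lt_inf'_iff]
    intro p hp
    exact div_pos (hTsupp p hp) (neg_pos.mpr (hTmem p hp))
  have htle : ∀ p ∈ T, t ≤ z p.1 p.2 / (-d p) := fun p hp => Finset.inf'_le _ hp
  set z' : Fin n → Fin m → ℝ := fun i o => z i o + t * d (i, o) with hz'
  have hz'nonneg : ∀ i o, 0 ≤ z' i o := by
    intro i o
    rcases le_or_gt 0 (d (i, o)) with h | h
    · have : 0 ≤ t * d (i, o) := mul_nonneg htpos.le h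
      simp only [hz']; linarith [hpos i o]
    · have hmem : (i, o) ∈ T := by simp [hT, h]
      have h1 := htle _ hmem
      rw [le_div_iff₀ (neg_pos.mpr h)] at h1
      simp only [hz']
      nlinarith
  have hz'feas : Feas v z' := by
    refine ⟨⟨hz'nonneg, ?_⟩, ?_⟩
    · intro o
      simp only [hz']
      rw [Finset.sum_add_distrib, hsum o, ← Finset.mul_sum, hdsum o, mul_zero, add_zero]
    · intro i j
      simp only [hz']
      rw [show (∑ o, v i o * (z j o + t * d (j, o)))
          = (∑ o, v i o * z j o) + t * ∑ o, v i o * d (j, o) by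
        rw [Finset.mul_sum, ← Finset.sum_add_distrib]; congr 1; ext o; ring]
      rw [hcons i j, hdcons' i j, mul_zero, add_zero]
  -- support strictly decreases
  have hsub : suppF z' ⊆ suppF z := by
    intro p hp
    by_contra h
    have h1 := hz_zero p h
    have h2 := hdsupp p h
    rw [hz_of_mem z'] at hp
    simp only [hz'] at hp
    rw [h1, h2, mul_zero, add_zero] at hp
    exact lt_irrefl _ hp
  obtain ⟨p0, hp0T, hp0⟩ := Finset.exists_mem_eq_inf' hTne (fun p => z p.1 p.2 / (-d p))
  have hp0z : z' p0.1 p0.2 = 0 := by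
    have hdneg := hTmem p0 hp0T
    have hne : d p0 ≠ 0 := hdneg.ne
    have htv : t = z p0.1 p0.2 / (-d p0) := hp0
    simp only [hz', htv]
    field_simp
    ring
  have hss : suppF z' ⊂ suppF z := by
    refine Finset.ssubset_iff_of_subset hsub |>.mpr ⟨p0, ?_, ?_⟩
    · rw [hz_of_mem z]; exact hTsupp p0 hp0T
    · rw [hz_of_mem z', hp0z]
      exact lt_irrefl 0
  exact absurd (hmin z' hz'feas) (not_le.mpr (Finset.card_lt_card hss))

end

/-- There exists a consensus allocation (every agent values every bundle at exactly
`Vᵢ / n`) with at most `n(n − 1)` sharings. -/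
theorem exists_consensus_few_sharings {n m : ℕ} (hn : 0 < n)
    (v : Fin n → Fin m → ℝ) :
    ∃ z : Fin n → Fin m → ℝ, isAlloc z ∧ sharings z ≤ n * (n - 1) ∧
      ∀ i j, ∑ o, v i o * z j o = (∑ o, v i o) / n := by
  classical
  have hn' : (n : ℝ) ≠ 0 := Nat.cast_ne_zero.mpr hn.ne'
  have hP0 : Feas v (fun _ _ => (1 : ℝ)/n) := by
    refine ⟨⟨fun i o => by positivity, fun o => ?_⟩, fun i j => ?_⟩
    · rw [Finset.sum_const, Finset.card_univ, Fintype.card_fin, nsmul_eq_mul]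
      field_simp
    · rw [Finset.sum_div]
      exact Finset.sum_congr rfl fun o _ => by rw [mul_one_div]
  have hKne : {k | ∃ z, Feas v z ∧ (suppF z).card = k}.Nonempty := ⟨_, _, hP0, rfl⟩
  obtain ⟨z, hz, hzc⟩ := Nat.sInf_mem hKne
  have hmin : ∀ z', Feas v z' → (suppF z).card ≤ (suppF z').card := by
    intro z' hz'
    rw [hzc]
    exact Nat.sInf_le ⟨z', hz', rfl⟩
  have hb := min_supp_le hn v z hz hmin
  refine ⟨z, hz.1, ?_, hz.2⟩
  have hcard : (suppF z).card = ∑ o, (univ.filter fun i => 0 < z i o).card := by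
    rw [suppF, Finset.card_eq_sum_card_fiberwise
      (f := fun p : Fin n × Fin m => p.2) (t := univ) (fun p _ => mem_univ _)]
    refine Finset.sum_congr rfl fun o _ => ?_
    refine Finset.card_bij (fun p _ => p.1) ?_ ?_ ?_
    · intro p hp
      simp only [Finset.mem_filter, Finset.mem_univ, true_and] at hp ⊢
      rw [← hp.2]; exact hp.1
    · intro p hp q hq h
      simp only [Finset.mem_filter] at hp hq
      exact Prod.ext h (hp.2.trans hq.2.symm)
    · intro i hi
      simp only [Finset.mem_filter, Finset.mem_univ, true_and] at hi ⊢
      exact ⟨(i, o), ⟨hi, rfl⟩, rfl⟩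
  have hone : ∀ o : Fin m, 1 ≤ (univ.filter fun i => 0 < z i o).card := by
    intro o
    rw [Nat.one_le_iff_ne_zero, ← Nat.pos_iff_ne_zero, Finset.card_pos]
    by_contra h
    rw [Finset.not_nonempty_iff_eq_empty, Finset.filter_eq_empty_iff] at h
    have : ∑ i, z i o = 0 := Finset.sum_eq_zero fun i _ =>
      le_antisymm (not_lt.mp (h (mem_univ i))) (hz.1.1 i o)
    rw [hz.1.2 o] at this
    norm_num at this
  have hkey : sharings z + ∑ _o : Fin m, 1 = ∑ o : Fin m, (univ.filter fun i => 0 < z i o).card := by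
    rw [sharings, ← Finset.sum_add_distrib]
    exact Finset.sum_congr rfl fun o _ => Nat.sub_add_cancel (hone o)
  simp only [Finset.sum_const, Finset.card_univ, Fintype.card_fin, smul_eq_mul, mul_one] at hkey
  omega
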